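/- (Distributed leftover hash lemma) Let (X,Y) be jointly distributed over X × Y, and let g : S × X → {0,1}^m and h : R × Y → {0,1}^n be 2-universal hash functions. If m ≤ H_∞(X) − 2 log(1/ε), n ≤ H_∞(Y) − 2 log(1/ε), and m + n ≤ H_∞(X,Y) − 2 log(1/ε), then for (S,R) uniform over S × R and independent of (X,Y), the tuple (g(S,X), h(R,Y), S, R) is (√3/2)·ε-close to (U_m, U_n, S, R), where U_m, U_n are independent uniform strings. -/

import Mathlib

open Finset

/-- Sum over a fintype of a product of two indicator-weighted values collapses. -/
lemma lhl_collapse {β : Type*} [Fintype β] [DecidableEq β] (b1 b2 : β) (x y : ℝ) :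
    ∑ b : β, (if b1 = b then x else 0) * (if b2 = b then y else 0)
      = if b1 = b2 then x * y else 0 := by
  rcases eq_or_ne b1 b2 with rfl | hne
  · rw [if_pos rfl, Finset.sum_eq_single_of_mem b1 (mem_univ _)]
    · simp
    · intro b _ hb
      rw [if_neg (fun hh => hb hh.symm), zero_mul]
  · rw [if_neg hne]
    apply Finset.sum_eq_zero
    intro b _
    rcases eq_or_ne b1 b with rfl | h1
    · rw [if_neg (fun hh : b2 = b1 => hne hh.symm), mul_zero]
    · rw [if_neg h1, zero_mul]

lemma lhl_count {S R : Type*} [Fintype S] [Fintype R] (A : S → Prop) (B : R → Prop)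
    [DecidablePred A] [DecidablePred B] (x y : ℝ) :
    ∑ sr : S × R, (if A sr.1 ∧ B sr.2 then x * y else 0)
      = (((Finset.univ.filter A).card : ℝ) * x) * (((Finset.univ.filter B).card : ℝ) * y) := by
  rw [Fintype.sum_prod_type]
  have hsplit : ∀ (s : S) (r : R), (if A s ∧ B r then x * y else 0)
      = (if A s then x else 0) * (if B r then y else 0) := by
    intro s r
    by_cases h1 : A s <;> by_cases h2 : B r <;> simp [h1, h2]
  simp only [hsplit]
  rw [← Finset.sum_mul_sum]
  congr 1
  · rw [← Finset.sum_filter, Finset.sum_const, nsmul_eq_mul]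
  · rw [← Finset.sum_filter, Finset.sum_const, nsmul_eq_mul]

/-- `∑ i, (if c then f i else 0) = if c then ∑ f else 0` for condition independent of i. -/
lemma lhl_sum_ite_const {ι : Type*} (s : Finset ι) (c : Prop) [Decidable c] (f : ι → ℝ) :
    ∑ i ∈ s, (if c then f i else 0) = if c then ∑ i ∈ s, f i else 0 := by
  split <;> simp

/-- abstract leftover-hash-lemma style bound via Cauchy-Schwarz. -/
lemma lhl_abstract {T : Type*} [Fintype T] (q : T → ℝ) (u e3 : ℝ)
    (hcard : (Fintype.card T : ℝ) * u = 1)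
    (hsum : ∑ t, q t = 1) (hsq : ∑ t, q t ^ 2 ≤ (1 + e3) * u) :
    ∑ t, |q t - u| ≤ Real.sqrt e3 := by
  have hCnn : (0:ℝ) ≤ (Fintype.card T : ℝ) := Nat.cast_nonneg _
  have h1 : (∑ t, |q t - u|) ^ 2 ≤ (Fintype.card T : ℝ) * ∑ t, (q t - u) ^ 2 := by
    have := sq_sum_le_card_mul_sum_sq (s := (Finset.univ : Finset T))
      (f := fun t => |q t - u|)
    simpa [sq_abs, Finset.card_univ] using this
  have h2 : ∑ t, (q t - u) ^ 2 = (∑ t, q t ^ 2) - u := by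
    have hexp : ∀ t, (q t - u) ^ 2 = q t ^ 2 - 2 * u * q t + u ^ 2 := fun t => by ring
    rw [Finset.sum_congr rfl (fun t _ => hexp t)]
    rw [Finset.sum_add_distrib, Finset.sum_sub_distrib, ← Finset.mul_sum, hsum,
      Finset.sum_const, Finset.card_univ, nsmul_eq_mul]
    have hu2 : (Fintype.card T : ℝ) * u ^ 2 = u := by
      rw [sq, ← mul_assoc, hcard, one_mul]
    linarith [hu2]
  have h3 : (∑ t, |q t - u|) ^ 2 ≤ e3 := by
    calc (∑ t, |q t - u|) ^ 2 ≤ (Fintype.card T : ℝ) * ∑ t, (q t - u) ^ 2 := h1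
      _ = (Fintype.card T : ℝ) * ((∑ t, q t ^ 2) - u) := by rw [h2]
      _ ≤ (Fintype.card T : ℝ) * ((1 + e3) * u - u) := by
          apply mul_le_mul_of_nonneg_left _ hCnn
          linarith [hsq]
      _ = e3 * ((Fintype.card T : ℝ) * u) := by ring
      _ = e3 := by rw [hcard, mul_one]
  have hnn : 0 ≤ ∑ t, |q t - u| := Finset.sum_nonneg fun t _ => abs_nonneg _
  calc ∑ t, |q t - u| = Real.sqrt ((∑ t, |q t - u|) ^ 2) := by rw [Real.sqrt_sq hnn]
    _ ≤ Real.sqrt e3 := Real.sqrt_le_sqrt h3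

theorem stmt_13 {X Y S R : Type*} [Fintype X] [Fintype Y]
    [Fintype S] [Nonempty S] [Fintype R] [Nonempty R]
    {m n : ℕ} (P : X × Y → ℝ)
    (g : S → X → (Fin m → Bool)) (h : R → Y → (Fin n → Bool)) (ε : ℝ)
    (hP : ∀ a, 0 ≤ P a) (hPs : ∑ a, P a = 1) (hε : 0 < ε)
    (hminX : ∀ x, (∑ y, P (x, y)) ≤ ε ^ 2 / 2 ^ m)
    (hminY : ∀ y, (∑ x, P (x, y)) ≤ ε ^ 2 / 2 ^ n)
    (hminXY : ∀ a, P a ≤ ε ^ 2 / 2 ^ (m + n))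
    (hunivg : ∀ x x', x ≠ x' →
      ((Finset.univ.filter (fun s => g s x = g s x')).card : ℝ) / (Fintype.card S)
        ≤ 1 / 2 ^ m)
    (hunivh : ∀ y y', y ≠ y' →
      ((Finset.univ.filter (fun r => h r y = h r y')).card : ℝ) / (Fintype.card R)
        ≤ 1 / 2 ^ n) :
    (1/2) * ∑ t : ((Fin m → Bool) × (Fin n → Bool)) × S × R,
        |(1 / ((Fintype.card S : ℝ) * (Fintype.card R : ℝ)))
            * ∑ a ∈ Finset.univ.filter
                (fun a : X × Y => g t.2.1 a.1 = t.1.1 ∧ h t.2.2 a.2 = t.1.2), P a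
          - 1 / ((2 ^ m : ℝ) * (2 ^ n : ℝ)
                  * (Fintype.card S : ℝ) * (Fintype.card R : ℝ))|
      ≤ (Real.sqrt 3 / 2) * ε := by
  classical
  set K : ℝ := (Fintype.card S : ℝ) with hKdef
  set L : ℝ := (Fintype.card R : ℝ) with hLdef
  have hK : 0 < K := by
    rw [hKdef]; exact_mod_cast Fintype.card_pos
  have hL : 0 < L := by
    rw [hLdef]; exact_mod_cast Fintype.card_pos
  set α : ℝ := 1 / 2 ^ m with hαdef
  set β : ℝ := 1 / 2 ^ n with hβdef
  have hα0 : 0 < α := by rw [hαdef]; positivity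
  have hβ0 : 0 < β := by rw [hβdef]; positivity
  have hα1 : α ≤ 1 := by
    rw [hαdef, div_le_one (by positivity)]
    exact one_le_pow₀ (by norm_num)
  have hβ1 : β ≤ 1 := by
    rw [hβdef, div_le_one (by positivity)]
    exact one_le_pow₀ (by norm_num)
  set u : ℝ := 1 / ((2 ^ m : ℝ) * (2 ^ n : ℝ) * K * L) with hudef
  -- filter rewriting
  have hfilt : ∀ (sr : S × R) (uv : (Fin m → Bool) × (Fin n → Bool)),
      (Finset.univ.filter (fun a : X × Y => g sr.1 a.1 = uv.1 ∧ h sr.2 a.2 = uv.2))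
        = Finset.univ.filter (fun a : X × Y => (g sr.1 a.1, h sr.2 a.2) = uv) := by
    intro sr uv
    apply Finset.filter_congr
    intro a _
    simp [Prod.ext_iff]
  -- sum of Q over all t equals K * L
  have hQsum : ∑ t : ((Fin m → Bool) × (Fin n → Bool)) × S × R,
      (∑ a ∈ Finset.univ.filter
        (fun a : X × Y => g t.2.1 a.1 = t.1.1 ∧ h t.2.2 a.2 = t.1.2), P a) = K * L := by
    rw [Fintype.sum_prod_type, Finset.sum_comm]
    have h1 : ∀ sr : S × R, ∑ uv : (Fin m → Bool) × (Fin n → Bool),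
        (∑ a ∈ Finset.univ.filter
          (fun a : X × Y => g sr.1 a.1 = uv.1 ∧ h sr.2 a.2 = uv.2), P a) = 1 := by
      intro sr
      simp only [hfilt sr]
      rw [Finset.sum_fiberwise Finset.univ (fun a : X × Y => (g sr.1 a.1, h sr.2 a.2)) P]
      exact hPs
    calc ∑ sr : S × R, ∑ uv : (Fin m → Bool) × (Fin n → Bool),
          (∑ a ∈ Finset.univ.filter
            (fun a : X × Y => g sr.1 a.1 = uv.1 ∧ h sr.2 a.2 = uv.2), P a)
        = ∑ _sr : S × R, (1:ℝ) := Finset.sum_congr rfl (fun sr _ => h1 sr)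
      _ = K * L := by
          rw [Finset.sum_const, Finset.card_univ, nsmul_eq_mul, mul_one,
            Fintype.card_prod, hKdef, hLdef]
          push_cast
          ring
  -- collision probability identity
  have hQ2eq : ∑ t : ((Fin m → Bool) × (Fin n → Bool)) × S × R,
      (∑ a ∈ Finset.univ.filter
        (fun a : X × Y => g t.2.1 a.1 = t.1.1 ∧ h t.2.2 a.2 = t.1.2), P a) ^ 2
      = ∑ a : X × Y, ∑ a' : X × Y,
          (((Finset.univ.filter (fun s => g s a.1 = g s a'.1)).card : ℝ) * P a)
          * (((Finset.univ.filter (fun r => h r a.2 = h r a'.2)).card : ℝ) * P a') := by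
    rw [Fintype.sum_prod_type, Finset.sum_comm]
    have hinner : ∀ sr : S × R, ∑ uv : (Fin m → Bool) × (Fin n → Bool),
        (∑ a ∈ Finset.univ.filter
          (fun a : X × Y => g sr.1 a.1 = uv.1 ∧ h sr.2 a.2 = uv.2), P a) ^ 2
        = ∑ a : X × Y, ∑ a' : X × Y,
            (if g sr.1 a.1 = g sr.1 a'.1 ∧ h sr.2 a.2 = h sr.2 a'.2
              then P a * P a' else 0) := by
      intro sr
      simp only [hfilt sr]
      calc ∑ uv : (Fin m → Bool) × (Fin n → Bool),
            (∑ a ∈ Finset.univ.filter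
              (fun a : X × Y => (g sr.1 a.1, h sr.2 a.2) = uv), P a) ^ 2
          = ∑ uv : (Fin m → Bool) × (Fin n → Bool), ∑ a : X × Y, ∑ a' : X × Y,
              (if (g sr.1 a.1, h sr.2 a.2) = uv then P a else 0)
              * (if (g sr.1 a'.1, h sr.2 a'.2) = uv then P a' else 0) := by
            refine Finset.sum_congr rfl fun uv _ => ?_
            rw [sq, Finset.sum_filter, Finset.sum_mul_sum]
        _ = ∑ a : X × Y, ∑ a' : X × Y, ∑ uv : (Fin m → Bool) × (Fin n → Bool),
              (if (g sr.1 a.1, h sr.2 a.2) = uv then P a else 0)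
              * (if (g sr.1 a'.1, h sr.2 a'.2) = uv then P a' else 0) := by
            rw [Finset.sum_comm]
            exact Finset.sum_congr rfl fun a _ => Finset.sum_comm
        _ = ∑ a : X × Y, ∑ a' : X × Y,
              (if g sr.1 a.1 = g sr.1 a'.1 ∧ h sr.2 a.2 = h sr.2 a'.2
                then P a * P a' else 0) := by
            refine Finset.sum_congr rfl fun a _ => Finset.sum_congr rfl fun a' _ => ?_
            rw [lhl_collapse (g sr.1 a.1, h sr.2 a.2) (g sr.1 a'.1, h sr.2 a'.2) (P a) (P a')]
            simp [Prod.ext_iff]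
    calc ∑ sr : S × R, ∑ uv : (Fin m → Bool) × (Fin n → Bool),
          (∑ a ∈ Finset.univ.filter
            (fun a : X × Y => g sr.1 a.1 = uv.1 ∧ h sr.2 a.2 = uv.2), P a) ^ 2
        = ∑ sr : S × R, ∑ a : X × Y, ∑ a' : X × Y,
            (if g sr.1 a.1 = g sr.1 a'.1 ∧ h sr.2 a.2 = h sr.2 a'.2
              then P a * P a' else 0) := Finset.sum_congr rfl fun sr _ => hinner sr
      _ = ∑ a : X × Y, ∑ a' : X × Y, ∑ sr : S × R,
            (if g sr.1 a.1 = g sr.1 a'.1 ∧ h sr.2 a.2 = h sr.2 a'.2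
              then P a * P a' else 0) := by
          rw [Finset.sum_comm]
          exact Finset.sum_congr rfl fun a _ => Finset.sum_comm
      _ = ∑ a : X × Y, ∑ a' : X × Y,
            (((Finset.univ.filter (fun s => g s a.1 = g s a'.1)).card : ℝ) * P a)
            * (((Finset.univ.filter (fun r => h r a.2 = h r a'.2)).card : ℝ) * P a') := by
          refine Finset.sum_congr rfl fun a _ => Finset.sum_congr rfl fun a' _ => ?_
          exact lhl_count (fun s => g s a.1 = g s a'.1) (fun r => h r a.2 = h r a'.2)
            (P a) (P a')
  have e2 : (0:ℝ) ≤ ε ^ 2 := sq_nonneg ε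
  -- T1
  have hT1 : ∑ a : X × Y, ∑ a' : X × Y, P a * P a' = 1 := by
    rw [← Finset.sum_mul_sum, hPs, mul_one]
  -- T4
  have hT4 : ∑ a : X × Y, ∑ a' : X × Y, (if a = a' then P a * P a' else 0)
      ≤ ε ^ 2 * (α * β) := by
    calc ∑ a : X × Y, ∑ a' : X × Y, (if a = a' then P a * P a' else 0)
        = ∑ a : X × Y, P a * P a :=
          Finset.sum_congr rfl fun a _ => by rw [Finset.sum_ite_eq]; simp
      _ ≤ ∑ a : X × Y, (ε ^ 2 * (α * β)) * P a := by
          refine Finset.sum_le_sum fun a _ => ?_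
          refine mul_le_mul_of_nonneg_right ?_ (hP a)
          calc P a ≤ ε ^ 2 / 2 ^ (m + n) := hminXY a
            _ = ε ^ 2 * (α * β) := by rw [hαdef, hβdef, pow_add]; ring
      _ = ε ^ 2 * (α * β) := by rw [← Finset.mul_sum, hPs, mul_one]
  -- T2
  have hT2 : ∑ a : X × Y, ∑ a' : X × Y, (if a.1 = a'.1 then P a * P a' else 0)
      ≤ ε ^ 2 * α := by
    calc ∑ a : X × Y, ∑ a' : X × Y, (if a.1 = a'.1 then P a * P a' else 0)
        = ∑ x : X, ∑ y : Y, ∑ x' : X, ∑ y' : Y,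
            (if x = x' then P (x, y) * P (x', y') else 0) := by
          simp only [Fintype.sum_prod_type]
      _ = ∑ x : X, ∑ y : Y, ∑ y' : Y, P (x, y) * P (x, y') := by
          refine Finset.sum_congr rfl fun x _ => Finset.sum_congr rfl fun y _ => ?_
          calc ∑ x' : X, ∑ y' : Y, (if x = x' then P (x, y) * P (x', y') else 0)
              = ∑ x' : X, (if x = x' then ∑ y' : Y, P (x, y) * P (x', y') else 0) :=
                Finset.sum_congr rfl fun x' _ => lhl_sum_ite_const _ _ _
            _ = ∑ y' : Y, P (x, y) * P (x, y') := by rw [Finset.sum_ite_eq]; simp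
      _ = ∑ x : X, (∑ y : Y, P (x, y)) * (∑ y' : Y, P (x, y')) := by
          refine Finset.sum_congr rfl fun x _ => ?_
          rw [Finset.sum_mul_sum]
      _ ≤ ∑ x : X, (ε ^ 2 * α) * (∑ y : Y, P (x, y)) := by
          refine Finset.sum_le_sum fun x _ => ?_
          refine mul_le_mul_of_nonneg_right ?_ (Finset.sum_nonneg fun y _ => hP _)
          calc ∑ y, P (x, y) ≤ ε ^ 2 / 2 ^ m := hminX x
            _ = ε ^ 2 * α := by rw [hαdef]; ring
      _ = ε ^ 2 * α := by
          rw [← Finset.mul_sum,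
            show ∑ x : X, ∑ y : Y, P (x, y) = ∑ a : X × Y, P a from
              (Fintype.sum_prod_type _).symm, hPs, mul_one]
  -- T3
  have hT3 : ∑ a : X × Y, ∑ a' : X × Y, (if a.2 = a'.2 then P a * P a' else 0)
      ≤ ε ^ 2 * β := by
    calc ∑ a : X × Y, ∑ a' : X × Y, (if a.2 = a'.2 then P a * P a' else 0)
        = ∑ x : X, ∑ y : Y, ∑ x' : X, ∑ y' : Y,
            (if y = y' then P (x, y) * P (x', y') else 0) := by
          simp only [Fintype.sum_prod_type]
      _ = ∑ x : X, ∑ y : Y, ∑ x' : X, P (x, y) * P (x', y) := by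
          refine Finset.sum_congr rfl fun x _ => Finset.sum_congr rfl fun y _ =>
            Finset.sum_congr rfl fun x' _ => ?_
          rw [Finset.sum_ite_eq]; simp
      _ = ∑ x : X, ∑ y : Y, P (x, y) * (∑ x' : X, P (x', y)) := by
          refine Finset.sum_congr rfl fun x _ => Finset.sum_congr rfl fun y _ => ?_
          rw [Finset.mul_sum]
      _ = ∑ y : Y, ∑ x : X, P (x, y) * (∑ x' : X, P (x', y)) := Finset.sum_comm
      _ = ∑ y : Y, (∑ x : X, P (x, y)) * (∑ x' : X, P (x', y)) := by
          refine Finset.sum_congr rfl fun y _ => ?_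
          rw [Finset.sum_mul]
      _ ≤ ∑ y : Y, (ε ^ 2 * β) * (∑ x' : X, P (x', y)) := by
          refine Finset.sum_le_sum fun y _ => ?_
          refine mul_le_mul_of_nonneg_right ?_ (Finset.sum_nonneg fun x _ => hP _)
          calc ∑ x, P (x, y) ≤ ε ^ 2 / 2 ^ n := hminY y
            _ = ε ^ 2 * β := by rw [hβdef]; ring
      _ = ε ^ 2 * β := by
          rw [← Finset.mul_sum,
            show ∑ y : Y, ∑ x : X, P (x, y) = ∑ a : X × Y, P a from by
              rw [Fintype.sum_prod_type]; exact Finset.sum_comm, hPs, mul_one]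
  -- core bound
  have hcore : ∑ a : X × Y, ∑ a' : X × Y,
      ((if a.1 = a'.1 then (1:ℝ) else α) * (if a.2 = a'.2 then (1:ℝ) else β))
        * (P a * P a')
      ≤ (1 + 3 * ε ^ 2) * (α * β) := by
    have hid : ∀ a a' : X × Y,
        ((if a.1 = a'.1 then (1:ℝ) else α) * (if a.2 = a'.2 then (1:ℝ) else β))
          * (P a * P a')
        = α * β * (P a * P a')
          + (α * (1 - β)) * (if a.2 = a'.2 then P a * P a' else 0)
          + (β * (1 - α)) * (if a.1 = a'.1 then P a * P a' else 0)
          + ((1 - α) * (1 - β)) * (if a = a' then P a * P a' else 0) := by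
      intro a a'
      by_cases h1 : a.1 = a'.1 <;> by_cases h2 : a.2 = a'.2 <;>
        simp [h1, h2, Prod.ext_iff] <;> ring
    calc ∑ a : X × Y, ∑ a' : X × Y,
          ((if a.1 = a'.1 then (1:ℝ) else α) * (if a.2 = a'.2 then (1:ℝ) else β))
            * (P a * P a')
        = α * β * (∑ a : X × Y, ∑ a' : X × Y, P a * P a')
          + (α * (1 - β)) * (∑ a : X × Y, ∑ a' : X × Y,
              (if a.2 = a'.2 then P a * P a' else 0))
          + (β * (1 - α)) * (∑ a : X × Y, ∑ a' : X × Y,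
              (if a.1 = a'.1 then P a * P a' else 0))
          + ((1 - α) * (1 - β)) * (∑ a : X × Y, ∑ a' : X × Y,
              (if a = a' then P a * P a' else 0)) := by
          rw [Finset.sum_congr rfl fun a (_ : a ∈ Finset.univ) =>
            Finset.sum_congr rfl fun a' _ => hid a a']
          simp only [Finset.sum_add_distrib, ← Finset.mul_sum]
      _ ≤ α * β * 1 + (α * (1 - β)) * (ε ^ 2 * β) + (β * (1 - α)) * (ε ^ 2 * α)
          + ((1 - α) * (1 - β)) * (ε ^ 2 * (α * β)) := by
          have c1 : (0:ℝ) ≤ α * (1 - β) := mul_nonneg hα0.le (by linarith)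
          have c2 : (0:ℝ) ≤ β * (1 - α) := mul_nonneg hβ0.le (by linarith)
          have c3 : (0:ℝ) ≤ (1 - α) * (1 - β) :=
            mul_nonneg (by linarith) (by linarith)
          have := mul_le_mul_of_nonneg_left hT3 c1
          have := mul_le_mul_of_nonneg_left hT2 c2
          have := mul_le_mul_of_nonneg_left hT4 c3
          rw [hT1]
          linarith
      _ ≤ (1 + 3 * ε ^ 2) * (α * β) := by
          have hA : (0:ℝ) ≤ ε ^ 2 * (α * α * β) := by positivity
          have hB : (0:ℝ) ≤ ε ^ 2 * (α * β * β) := by positivity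
          have hC : (0:ℝ) ≤ ε ^ 2 * (α * β * β) * (1 - α) :=
            mul_nonneg hB (by linarith)
          nlinarith [hA, hB, hC]
  -- termwise bound and the collision sum bound
  have hQsqBound : ∑ t : ((Fin m → Bool) × (Fin n → Bool)) × S × R,
      (∑ a ∈ Finset.univ.filter
        (fun a : X × Y => g t.2.1 a.1 = t.1.1 ∧ h t.2.2 a.2 = t.1.2), P a) ^ 2
      ≤ K * L * ((1 + 3 * ε ^ 2) * (α * β)) := by
    rw [hQ2eq]
    have hpt : ∀ a a' : X × Y,
        (((Finset.univ.filter (fun s => g s a.1 = g s a'.1)).card : ℝ) * P a)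
          * (((Finset.univ.filter (fun r => h r a.2 = h r a'.2)).card : ℝ) * P a')
        ≤ (K * L) * (((if a.1 = a'.1 then (1:ℝ) else α)
            * (if a.2 = a'.2 then (1:ℝ) else β)) * (P a * P a')) := by
      intro a a'
      have hg : ((Finset.univ.filter (fun s => g s a.1 = g s a'.1)).card : ℝ)
          ≤ K * (if a.1 = a'.1 then (1:ℝ) else α) := by
        by_cases hxx : a.1 = a'.1
        · rw [if_pos hxx, mul_one, hKdef]
          exact_mod_cast (Finset.card_filter_le _ _).trans_eq (Finset.card_univ)
        · rw [if_neg hxx]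
          have hb := hunivg a.1 a'.1 hxx
          rw [div_le_iff₀ hK] at hb
          calc ((Finset.univ.filter (fun s => g s a.1 = g s a'.1)).card : ℝ)
              ≤ 1 / 2 ^ m * K := hb
            _ = K * α := by rw [hαdef]; ring
      have hh : ((Finset.univ.filter (fun r => h r a.2 = h r a'.2)).card : ℝ)
          ≤ L * (if a.2 = a'.2 then (1:ℝ) else β) := by
        by_cases hyy : a.2 = a'.2
        · rw [if_pos hyy, mul_one, hLdef]
          exact_mod_cast (Finset.card_filter_le _ _).trans_eq (Finset.card_univ)
        · rw [if_neg hyy]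
          have hb := hunivh a.2 a'.2 hyy
          rw [div_le_iff₀ hL] at hb
          calc ((Finset.univ.filter (fun r => h r a.2 = h r a'.2)).card : ℝ)
              ≤ 1 / 2 ^ n * L := hb
            _ = L * β := by rw [hβdef]; ring
      have heg : (0:ℝ) ≤ (if a.1 = a'.1 then (1:ℝ) else α) := by
        split <;> [norm_num; exact hα0.le]
      have heh : (0:ℝ) ≤ (if a.2 = a'.2 then (1:ℝ) else β) := by
        split <;> [norm_num; exact hβ0.le]
      have h1 : ((Finset.univ.filter (fun s => g s a.1 = g s a'.1)).card : ℝ) * P a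
          ≤ (K * (if a.1 = a'.1 then (1:ℝ) else α)) * P a :=
        mul_le_mul_of_nonneg_right hg (hP a)
      have h2 : ((Finset.univ.filter (fun r => h r a.2 = h r a'.2)).card : ℝ) * P a'
          ≤ (L * (if a.2 = a'.2 then (1:ℝ) else β)) * P a' :=
        mul_le_mul_of_nonneg_right hh (hP a')
      calc (((Finset.univ.filter (fun s => g s a.1 = g s a'.1)).card : ℝ) * P a)
            * (((Finset.univ.filter (fun r => h r a.2 = h r a'.2)).card : ℝ) * P a')
          ≤ ((K * (if a.1 = a'.1 then (1:ℝ) else α)) * P a)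
            * ((L * (if a.2 = a'.2 then (1:ℝ) else β)) * P a') := by
            refine mul_le_mul h1 h2 (mul_nonneg (Nat.cast_nonneg _) (hP a')) ?_
            exact mul_nonneg (mul_nonneg hK.le heg) (hP a)
        _ = (K * L) * (((if a.1 = a'.1 then (1:ℝ) else α)
              * (if a.2 = a'.2 then (1:ℝ) else β)) * (P a * P a')) := by ring
    calc ∑ a : X × Y, ∑ a' : X × Y,
          (((Finset.univ.filter (fun s => g s a.1 = g s a'.1)).card : ℝ) * P a)
          * (((Finset.univ.filter (fun r => h r a.2 = h r a'.2)).card : ℝ) * P a')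
        ≤ ∑ a : X × Y, ∑ a' : X × Y,
            (K * L) * (((if a.1 = a'.1 then (1:ℝ) else α)
              * (if a.2 = a'.2 then (1:ℝ) else β)) * (P a * P a')) :=
          Finset.sum_le_sum fun a _ => Finset.sum_le_sum fun a' _ => hpt a a'
      _ = (K * L) * ∑ a : X × Y, ∑ a' : X × Y,
            ((if a.1 = a'.1 then (1:ℝ) else α)
              * (if a.2 = a'.2 then (1:ℝ) else β)) * (P a * P a') := by
          simp only [← Finset.mul_sum]
      _ ≤ (K * L) * ((1 + 3 * ε ^ 2) * (α * β)) :=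
          mul_le_mul_of_nonneg_left hcore (by positivity)
  -- assemble via the abstract lemma
  have hcard : (Fintype.card (((Fin m → Bool) × (Fin n → Bool)) × S × R) : ℝ) * u = 1 := by
    have hc : (Fintype.card (((Fin m → Bool) × (Fin n → Bool)) × S × R) : ℝ)
        = (2 ^ m : ℝ) * (2 ^ n : ℝ) * K * L := by
      rw [hKdef, hLdef]
      simp only [Fintype.card_prod, Fintype.card_fun, Fintype.card_bool, Fintype.card_fin]
      push_cast
      ring
    rw [hc, hudef]
    field_simp
  have hsum' : ∑ t : ((Fin m → Bool) × (Fin n → Bool)) × S × R,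
      (1 / (K * L)) * (∑ a ∈ Finset.univ.filter
        (fun a : X × Y => g t.2.1 a.1 = t.1.1 ∧ h t.2.2 a.2 = t.1.2), P a) = 1 := by
    rw [← Finset.mul_sum, hQsum]
    field_simp
  have hsq' : ∑ t : ((Fin m → Bool) × (Fin n → Bool)) × S × R,
      ((1 / (K * L)) * (∑ a ∈ Finset.univ.filter
        (fun a : X × Y => g t.2.1 a.1 = t.1.1 ∧ h t.2.2 a.2 = t.1.2), P a)) ^ 2
      ≤ (1 + 3 * ε ^ 2) * u := by
    have hexp : ∀ t : ((Fin m → Bool) × (Fin n → Bool)) × S × R,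
        ((1 / (K * L)) * (∑ a ∈ Finset.univ.filter
          (fun a : X × Y => g t.2.1 a.1 = t.1.1 ∧ h t.2.2 a.2 = t.1.2), P a)) ^ 2
        = (1 / (K * L)) ^ 2 * (∑ a ∈ Finset.univ.filter
          (fun a : X × Y => g t.2.1 a.1 = t.1.1 ∧ h t.2.2 a.2 = t.1.2), P a) ^ 2 :=
      fun t => by ring
    rw [Finset.sum_congr rfl fun t _ => hexp t, ← Finset.mul_sum]
    calc (1 / (K * L)) ^ 2 * ∑ t : ((Fin m → Bool) × (Fin n → Bool)) × S × R,
          (∑ a ∈ Finset.univ.filter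
            (fun a : X × Y => g t.2.1 a.1 = t.1.1 ∧ h t.2.2 a.2 = t.1.2), P a) ^ 2
        ≤ (1 / (K * L)) ^ 2 * (K * L * ((1 + 3 * ε ^ 2) * (α * β))) :=
          mul_le_mul_of_nonneg_left hQsqBound (by positivity)
      _ = (1 + 3 * ε ^ 2) * u := by
          rw [hudef, hαdef, hβdef]
          field_simp
  have key : ∑ t : ((Fin m → Bool) × (Fin n → Bool)) × S × R,
      |(1 / (K * L)) * (∑ a ∈ Finset.univ.filter
        (fun a : X × Y => g t.2.1 a.1 = t.1.1 ∧ h t.2.2 a.2 = t.1.2), P a) - u|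
      ≤ Real.sqrt 3 * ε := by
    have h0 := lhl_abstract
      (fun t : ((Fin m → Bool) × (Fin n → Bool)) × S × R =>
        (1 / (K * L)) * (∑ a ∈ Finset.univ.filter
          (fun a : X × Y => g t.2.1 a.1 = t.1.1 ∧ h t.2.2 a.2 = t.1.2), P a))
      u (3 * ε ^ 2) hcard hsum' hsq'
    have hs : Real.sqrt (3 * ε ^ 2) = Real.sqrt 3 * ε := by
      rw [Real.sqrt_mul (by norm_num : (0:ℝ) ≤ 3), Real.sqrt_sq hε.le]
    rw [hs] at h0
    exact h0
  calc (1/2) * ∑ t : ((Fin m → Bool) × (Fin n → Bool)) × S × R,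
        |(1 / (K * L)) * (∑ a ∈ Finset.univ.filter
          (fun a : X × Y => g t.2.1 a.1 = t.1.1 ∧ h t.2.2 a.2 = t.1.2), P a) - u|
      ≤ (1/2) * (Real.sqrt 3 * ε) := by
        exact mul_le_mul_of_nonneg_left key (by norm_num)
    _ = (Real.sqrt 3 / 2) * ε := by ring
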